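/- Let γ₁,…,γ_n ∈ ℝ^k (n ≥ 1) be polarized by ξ ∈ ℝ^k, let c ∈ ℝ^k, and let ψ ∈ 𝒮(ℝ^k). Then ∫_{[0,∞)^n} ψ̂(c + Σ_{j=1}^n s_j γ_j) ds = lim_{ε→0⁺} ∫_{ℝ^k} e^{−i⟨x,c⟩} ψ(x) · Π_{j=1}^n (i⟨γ_j, x⟩ + ε⟨γ_j, ξ⟩)^{−1} dx; in particular the limit on the right exists. This is the rigorous form of the statement that the Fourier transform of the tempered function x ↦ e^{i⟨c,x⟩}/Π_j ⟨γ_j, x⟩ (with each factor 1/⟨γ_j,·⟩ interpreted as the boundary value 1/(⟨γ_j,·⟩ + i0)) equals, up to the constant (2πi)^n, the cone distribution δ_c ∗ h_{γ₁} ∗ ⋯ ∗ h_{γ_n}. -/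

import Mathlib

open MeasureTheory Set Filter Topology
open scoped RealInnerProductSpace

open Complex


lemma aux_integrableOn_cexp {z : ℂ} (hz : 0 < z.re) :
    IntegrableOn (fun s : ℝ => Complex.exp (-(s * z))) (Ioi 0) := by
  have hmeas : AEStronglyMeasurable (fun s : ℝ => Complex.exp (-(s * z)))
      (volume.restrict (Ioi (0:ℝ))) :=
    (Complex.continuous_exp.comp (by fun_prop)).aestronglyMeasurable
  refine Integrable.mono' (exp_neg_integrableOn_Ioi 0 hz) hmeas ?_
  filter_upwards with s
  rw [Complex.norm_exp]
  simp [mul_comm]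

lemma aux_integral_cexp {z : ℂ} (hz : 0 < z.re) :
    ∫ s in Ioi (0:ℝ), Complex.exp (-(s * z)) = z⁻¹ := by
  have hz0 : z ≠ 0 := fun h => by simp [h] at hz
  have hderiv : ∀ s ∈ Ioi (0:ℝ),
      HasDerivAt (fun s : ℝ => -z⁻¹ * Complex.exp (-(s * z))) (Complex.exp (-(s * z))) s := by
    intro s _
    have h1 : HasDerivAt (fun s : ℝ => -((s:ℂ) * z)) (-z) s := by
      have h := ((Complex.ofRealCLM.hasDerivAt (x := s)).mul_const z).neg
      simp at h
      exact h
    have := (h1.cexp).const_mul (-z⁻¹)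
    convert this using 1
    · rfl
    · field_simp
  have hcont : ContinuousWithinAt (fun s : ℝ => -z⁻¹ * Complex.exp (-(s * z))) (Ici 0) 0 := by
    apply Continuous.continuousWithinAt; fun_prop
  have htend : Tendsto (fun s : ℝ => -z⁻¹ * Complex.exp (-(s * z))) atTop (𝓝 0) := by
    rw [tendsto_zero_iff_norm_tendsto_zero]
    have : (fun s : ℝ => ‖-z⁻¹ * Complex.exp (-(s * z))‖)
        = fun s : ℝ => ‖z⁻¹‖ * Real.exp (-(z.re * s)) := by
      ext s
      rw [norm_mul, norm_neg, Complex.norm_exp]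
      simp [mul_comm]
    rw [this]
    simpa using (Real.tendsto_exp_neg_atTop_nhds_zero.comp
      (tendsto_id.const_mul_atTop hz)).const_mul ‖z⁻¹‖
  have := integral_Ioi_of_hasDerivAt_of_tendsto hcont hderiv (aux_integrableOn_cexp hz) htend
  rw [this]
  simp [hz0]


lemma aux_indicator_pi_prod {n : ℕ} {M : Type*} [CommMonoidWithZero M] (f : Fin n → ℝ → M)
    (s : Fin n → ℝ) :
    Set.indicator (Ici (0 : Fin n → ℝ)) (fun s => ∏ j, f j (s j)) s
      = ∏ j, Set.indicator (Ici (0:ℝ)) (f j) (s j) := by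
  by_cases h : s ∈ Ici (0 : Fin n → ℝ)
  · rw [Set.indicator_of_mem h]
    exact Finset.prod_congr rfl fun j _ => (Set.indicator_of_mem (h j) _).symm
  · rw [Set.indicator_of_notMem h]
    obtain ⟨j, hj⟩ : ∃ j, ¬ (0:ℝ) ≤ s j := by
      by_contra hc
      push_neg at hc
      exact h fun j => hc j
    exact (Finset.prod_eq_zero (Finset.mem_univ j) (Set.indicator_of_notMem hj _)).symm

lemma aux_measurable_Ici_pi {n : ℕ} : MeasurableSet (Ici (0 : Fin n → ℝ)) := by
  rw [← Set.pi_univ_Ici]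
  exact MeasurableSet.univ_pi fun _ => measurableSet_Ici

lemma aux_integral_Ici_pi_prod {n : ℕ} {𝕜 : Type*} [RCLike 𝕜] (f : Fin n → ℝ → 𝕜) :
    ∫ s in Ici (0 : Fin n → ℝ), ∏ j, f j (s j)
      = ∏ j, ∫ u in Ici (0:ℝ), f j u := by
  rw [← integral_indicator aux_measurable_Ici_pi]
  simp_rw [aux_indicator_pi_prod f]
  rw [MeasureTheory.integral_fintype_prod_volume_eq_prod
    (f := fun j => Set.indicator (Ici (0:ℝ)) (f j))]
  exact Finset.prod_congr rfl fun j _ => (integral_indicator measurableSet_Ici)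

lemma aux_integrableOn_Ici_pi_prod {n : ℕ} {𝕜 : Type*} [RCLike 𝕜] {f : Fin n → ℝ → 𝕜}
    (hf : ∀ j, IntegrableOn (f j) (Ici (0:ℝ))) :
    IntegrableOn (fun s : Fin n → ℝ => ∏ j, f j (s j)) (Ici (0 : Fin n → ℝ)) := by
  rw [← integrable_indicator_iff aux_measurable_Ici_pi]
  rw [show Set.indicator (Ici (0 : Fin n → ℝ)) (fun s => ∏ j, f j (s j))
      = fun s => ∏ j, Set.indicator (Ici (0:ℝ)) (f j) (s j) from funext (aux_indicator_pi_prod f)]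
  exact MeasureTheory.Integrable.fintype_prod fun j =>
    (integrable_indicator_iff measurableSet_Ici).2 (hf j)


lemma aux_exp_neg_sum {n : ℕ} (z : Fin n → ℂ) (s : Fin n → ℝ) :
    Complex.exp (-∑ j, (s j : ℂ) * z j) = ∏ j, Complex.exp (-((s j : ℂ) * z j)) := by
  rw [← Complex.exp_sum, ← Finset.sum_neg_distrib]

lemma aux_integral_pi_cexp {n : ℕ} {z : Fin n → ℂ} (hz : ∀ j, 0 < (z j).re) :
    ∫ s in Ici (0 : Fin n → ℝ), Complex.exp (-∑ j, (s j : ℂ) * z j) = ∏ j, (z j)⁻¹ := by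
  simp_rw [aux_exp_neg_sum]
  rw [aux_integral_Ici_pi_prod (fun j u => Complex.exp (-((u:ℂ) * z j)))]
  refine Finset.prod_congr rfl fun j _ => ?_
  rw [integral_Ici_eq_integral_Ioi]
  exact aux_integral_cexp (hz j)

lemma aux_integrableOn_pi_cexp {n : ℕ} {z : Fin n → ℂ} (hz : ∀ j, 0 < (z j).re) :
    IntegrableOn (fun s : Fin n → ℝ => Complex.exp (-∑ j, (s j : ℂ) * z j))
      (Ici (0 : Fin n → ℝ)) := by
  simp_rw [aux_exp_neg_sum]
  exact aux_integrableOn_Ici_pi_prod (f := fun j u => Complex.exp (-((u:ℂ) * z j)))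
    fun j => (integrableOn_Ici_iff_integrableOn_Ioi).2 (aux_integrableOn_cexp (hz j))

lemma aux_integrableOn_pi_rexp {n : ℕ} {b : Fin n → ℝ} (hb : ∀ j, 0 < b j) :
    IntegrableOn (fun s : Fin n → ℝ => Real.exp (-∑ j, s j * b j))
      (Ici (0 : Fin n → ℝ)) := by
  have : ∀ s : Fin n → ℝ, Real.exp (-∑ j, s j * b j) = ∏ j, Real.exp (-(b j) * s j) := by
    intro s
    rw [← Real.exp_sum, ← Finset.sum_neg_distrib]
    congr 1
    exact Finset.sum_congr rfl fun j _ => by ring_nf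
  simp_rw [this]
  exact aux_integrableOn_Ici_pi_prod (f := fun j u => Real.exp (-(b j) * u))
    fun j => (integrableOn_Ici_iff_integrableOn_Ioi).2 (exp_neg_integrableOn_Ioi 0 (hb j))


lemma aux_schwartz_decay {E : Type*} [NormedAddCommGroup E] [NormedSpace ℝ E]
    (φ : SchwartzMap E ℂ) (d : ℕ) :
    ∃ C : ℝ, 0 ≤ C ∧ ∀ u, ‖φ u‖ * (1 + ‖u‖) ^ d ≤ C := by
  refine ⟨2 ^ d * (Finset.Iic (d, 0)).sup (fun m => SchwartzMap.seminorm ℝ m.1 m.2) φ, by positivity, fun u => ?_⟩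
  have := SchwartzMap.one_add_le_sup_seminorm_apply (𝕜 := ℝ) (m := (d, 0)) le_rfl le_rfl φ u
  rwa [norm_iteratedFDeriv_zero, mul_comm] at this

lemma aux_fourier_eq {k : ℕ} (ψ : SchwartzMap (EuclideanSpace ℝ (Fin k)) ℂ)
    (t : EuclideanSpace ℝ (Fin k)) :
    ∫ x : EuclideanSpace ℝ (Fin k), Complex.exp (-Complex.I * (⟪x, t⟫ : ℂ)) * ψ x
      = FourierTransform.fourier (fun x => ψ x) ((2 * Real.pi)⁻¹ • t) := by
  rw [Real.fourier_eq']
  refine integral_congr_ae (Eventually.of_forall fun x => ?_)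
  simp only []
  rw [real_inner_smul_right, smul_eq_mul]
  congr 1
  rw [show -2 * Real.pi * ((2 * Real.pi)⁻¹ * (inner ℝ x t : ℝ)) = -(inner ℝ x t : ℝ) by
    field_simp]
  push_cast
  ring


lemma aux_integrableOn_inv_sq :
    IntegrableOn (fun u : ℝ => ((1 + u) ^ 2)⁻¹) (Ici (0:ℝ)) := by
  refine Integrable.mono' (g := fun u : ℝ => (1 + u ^ 2)⁻¹)
    (integrable_inv_one_add_sq.integrableOn) ?_ ?_
  · exact ((measurable_const.add measurable_id).pow_const 2).inv.aestronglyMeasurable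
  · rw [ae_restrict_iff' measurableSet_Ici]
    filter_upwards with u hu
    rw [Real.norm_eq_abs, _root_.abs_of_nonneg (by positivity)]
    have hu' : (0:ℝ) ≤ u := hu
    apply inv_anti₀ (by positivity)
    nlinarith [hu']

lemma aux_decay_integrable {k n : ℕ} (hn : 1 ≤ n)
    (γ : Fin n → EuclideanSpace ℝ (Fin k)) (ξ : EuclideanSpace ℝ (Fin k))
    (hpol : ∀ j, 0 < ⟪γ j, ξ⟫) (c : EuclideanSpace ℝ (Fin k))
    (φ : SchwartzMap (EuclideanSpace ℝ (Fin k)) ℂ) :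
    IntegrableOn
      (fun s : Fin n → ℝ => φ ((2 * Real.pi)⁻¹ • (c + ∑ j, s j • γ j)))
      (Ici (0 : Fin n → ℝ)) := by
  haveI : Nonempty (Fin n) := ⟨⟨0, hn⟩⟩
  obtain ⟨C, hC0, hC⟩ := aux_schwartz_decay φ (2 * n)
  -- minimum of the inner products
  set m : ℝ := Finset.univ.inf' Finset.univ_nonempty (fun j => ⟪γ j, ξ⟫) with hm_def
  have hm_pos : 0 < m := (Finset.lt_inf'_iff _).2 (fun j _ => hpol j)
  have hm_le : ∀ j, m ≤ ⟪γ j, ξ⟫ := fun j => Finset.inf'_le _ (Finset.mem_univ j)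
  have hξ : 0 < ‖ξ‖ := by
    rcases eq_or_ne ξ 0 with h | h
    · exfalso; have := hpol ⟨0, hn⟩; rw [h, inner_zero_right] at this; exact lt_irrefl _ this
    · exact norm_pos_iff.2 h
  set K : ℝ := (2 * Real.pi * ‖ξ‖ + |⟪c, ξ⟫| + m) / m with hK_def
  have hπ : (0:ℝ) < 2 * Real.pi := by positivity
  have hK_pos : 0 < K := by
    apply div_pos _ hm_pos
    positivity
  have hKm : K * m = 2 * Real.pi * ‖ξ‖ + |⟪c, ξ⟫| + m := by
    rw [hK_def, div_mul_cancel₀ _ hm_pos.ne']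
  have key : ∀ s ∈ Ici (0 : Fin n → ℝ),
      1 + ∑ j, s j ≤ K * (1 + ‖(2 * Real.pi)⁻¹ • (c + ∑ j, s j • γ j)‖) := by
    intro s hs
    have hs' : ∀ j, 0 ≤ s j := fun j => hs j
    set t : EuclideanSpace ℝ (Fin k) := c + ∑ j, s j • γ j with ht_def
    set N : ℝ := ‖(2 * Real.pi)⁻¹ • t‖ with hN_def
    have hN0 : 0 ≤ N := norm_nonneg _
    have h4 : ‖t‖ = 2 * Real.pi * N := by
      rw [hN_def, norm_smul, Real.norm_eq_abs, _root_.abs_of_pos (by positivity : (0:ℝ) < (2*Real.pi)⁻¹)]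
      field_simp
    have h1 : ⟪t, ξ⟫ = ⟪c, ξ⟫ + ∑ j, s j * ⟪γ j, ξ⟫ := by
      rw [ht_def, inner_add_left, sum_inner]
      congr 1
      exact Finset.sum_congr rfl fun j _ => real_inner_smul_left _ _ _
    have h2 : m * (∑ j, s j) ≤ ∑ j, s j * ⟪γ j, ξ⟫ := by
      rw [Finset.mul_sum]
      refine Finset.sum_le_sum fun j _ => ?_
      calc m * s j = s j * m := by ring
        _ ≤ s j * ⟪γ j, ξ⟫ := mul_le_mul_of_nonneg_left (hm_le j) (hs' j)
    have h3 : ⟪t, ξ⟫ ≤ ‖t‖ * ‖ξ‖ := real_inner_le_norm t ξ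
    have h5 : ⟪c, ξ⟫ + m * (∑ j, s j) ≤ 2 * Real.pi * N * ‖ξ‖ := by
      rw [← h4, ← mul_comm ‖ξ‖ ‖t‖] at *
      nlinarith [h1, h2, h3]
    have habs : -|⟪c, ξ⟫| ≤ ⟪c, ξ⟫ := neg_abs_le _
    rw [← mul_le_mul_iff_right₀ hm_pos]
    have expand : m * (K * (1 + N)) = K * m + K * m * N := by ring
    rw [expand, hKm]
    nlinarith [mul_nonneg (mul_nonneg hπ.le hξ.le) hN0, hN0,
      mul_nonneg (abs_nonneg ⟪c, ξ⟫) hN0, mul_nonneg hm_pos.le hN0,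
      Finset.sum_nonneg (s := Finset.univ) fun j (_ : j ∈ Finset.univ) => hs' j]
  -- pointwise bound
  have key2 : ∀ s ∈ Ici (0 : Fin n → ℝ),
      ‖φ ((2 * Real.pi)⁻¹ • (c + ∑ j, s j • γ j))‖
        ≤ (C * K ^ (2 * n)) * ∏ j, ((1 + s j) ^ 2)⁻¹ := by
    intro s hs
    have hs' : ∀ j, 0 ≤ s j := fun j => hs j
    set u : EuclideanSpace ℝ (Fin k) := (2 * Real.pi)⁻¹ • (c + ∑ j, s j • γ j) with hu_def
    set r : ℝ := ∑ j, s j with hr_def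
    have hr0 : 0 ≤ r := Finset.sum_nonneg fun j _ => hs' j
    have hprod_pos : (0:ℝ) < ∏ j, (1 + s j) ^ 2 :=
      Finset.prod_pos fun j _ => by nlinarith [hs' j]
    have h5 : ∏ j, (1 + s j) ^ 2 ≤ (1 + r) ^ (2 * n) := by
      calc ∏ j, (1 + s j) ^ 2 ≤ ∏ _j : Fin n, (1 + r) ^ 2 := by
            refine Finset.prod_le_prod (fun j _ => by positivity) (fun j _ => ?_)
            have : s j ≤ r := Finset.single_le_sum (fun i _ => hs' i) (Finset.mem_univ j)
            nlinarith [hs' j]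
        _ = (1 + r) ^ (2 * n) := by
            rw [Finset.prod_const, Finset.card_univ, Fintype.card_fin, ← pow_mul, mul_comm 2 n]
    have h6 : (1 + r) ^ (2 * n) ≤ (K * (1 + ‖u‖)) ^ (2 * n) :=
      pow_le_pow_left₀ (by positivity) (key s hs) _
    have h7 : ‖φ u‖ * ∏ j, (1 + s j) ^ 2 ≤ C * K ^ (2 * n) := by
      calc ‖φ u‖ * ∏ j, (1 + s j) ^ 2
          ≤ ‖φ u‖ * (K * (1 + ‖u‖)) ^ (2 * n) := by
            exact mul_le_mul_of_nonneg_left (h5.trans h6) (norm_nonneg _)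
        _ = K ^ (2 * n) * (‖φ u‖ * (1 + ‖u‖) ^ (2 * n)) := by rw [mul_pow]; ring
        _ ≤ K ^ (2 * n) * C := mul_le_mul_of_nonneg_left (hC u) (by positivity)
        _ = C * K ^ (2 * n) := by ring
    have : ‖φ u‖ ≤ (C * K ^ (2 * n)) / ∏ j, (1 + s j) ^ 2 := by
      rw [le_div_iff₀ hprod_pos]; exact h7
    calc ‖φ u‖ ≤ (C * K ^ (2 * n)) / ∏ j, (1 + s j) ^ 2 := this
      _ = (C * K ^ (2 * n)) * ∏ j, ((1 + s j) ^ 2)⁻¹ := by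
          rw [div_eq_mul_inv, ← Finset.prod_inv_distrib]
  -- conclude integrability
  have hint : IntegrableOn (fun s : Fin n → ℝ => (C * K ^ (2 * n)) * ∏ j, ((1 + s j) ^ 2)⁻¹)
      (Ici (0 : Fin n → ℝ)) := by
    exact (aux_integrableOn_Ici_pi_prod (f := fun _j u => ((1 + u) ^ 2)⁻¹)
      (fun _j => aux_integrableOn_inv_sq)).const_mul _
  refine Integrable.mono' hint ?_ ?_
  · refine Continuous.aestronglyMeasurable ?_
    exact φ.continuous.comp (by fun_prop)
  · rw [ae_restrict_iff' aux_measurable_Ici_pi]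
    filter_upwards with s hs
    exact key2 s hs


lemma aux_eps_eq {k n : ℕ}
    (γ : Fin n → EuclideanSpace ℝ (Fin k)) (ξ : EuclideanSpace ℝ (Fin k))
    (hpol : ∀ j, 0 < ⟪γ j, ξ⟫) (c : EuclideanSpace ℝ (Fin k))
    (ψ : SchwartzMap (EuclideanSpace ℝ (Fin k)) ℂ) {ε : ℝ} (hε : 0 < ε) :
    (∫ x : EuclideanSpace ℝ (Fin k),
        Complex.exp (-Complex.I * (⟪x, c⟫ : ℂ)) * ψ x *
          ∏ j, (Complex.I * (⟪γ j, x⟫ : ℂ) + ((ε * ⟪γ j, ξ⟫ : ℝ) : ℂ))⁻¹)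
      = ∫ s in Set.Ici (0 : Fin n → ℝ),
          ((Real.exp (-∑ j, s j * (ε * ⟪γ j, ξ⟫)) : ℝ) : ℂ) *
            ∫ x : EuclideanSpace ℝ (Fin k),
              Complex.exp (-Complex.I * (⟪x, c + ∑ j, s j • γ j⟫ : ℂ)) * ψ x := by
  have hEdef : True := trivial
  set z : Fin n → EuclideanSpace ℝ (Fin k) → ℂ :=
    fun j x => Complex.I * (⟪γ j, x⟫ : ℂ) + ((ε * ⟪γ j, ξ⟫ : ℝ) : ℂ) with hz_def
  have hz_re : ∀ (x : EuclideanSpace ℝ (Fin k)) (j), (z j x).re = ε * ⟪γ j, ξ⟫ := by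
    intro x j; simp [hz_def]
  have hz_pos : ∀ (x : EuclideanSpace ℝ (Fin k)) (j), 0 < (z j x).re := by
    intro x j; rw [hz_re]; exact mul_pos hε (hpol j)
  have hinner : ∀ v : EuclideanSpace ℝ (Fin k), Continuous fun x : EuclideanSpace ℝ (Fin k) => (⟪v, x⟫ : ℝ) :=
    fun v => continuous_const.inner continuous_id
  have hinner' : ∀ v : EuclideanSpace ℝ (Fin k), Continuous fun x : EuclideanSpace ℝ (Fin k) => (⟪x, v⟫ : ℝ) :=
    fun v => continuous_id.inner continuous_const
  -- continuity of the big integrand on the product space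
  have hcont : Continuous (Function.uncurry fun (x : EuclideanSpace ℝ (Fin k)) (s : Fin n → ℝ) =>
      Complex.exp (-Complex.I * (⟪x, c⟫ : ℂ)) * ψ x *
        Complex.exp (-∑ j, (s j : ℂ) * z j x)) := by
    apply Continuous.mul
    · apply Continuous.mul
      · exact Complex.continuous_exp.comp (continuous_const.mul
          (Complex.continuous_ofReal.comp ((hinner' c).comp continuous_fst)))
      · exact ψ.continuous.comp continuous_fst
    · refine Complex.continuous_exp.comp (Continuous.neg ?_)
      refine continuous_finset_sum _ fun j _ => Continuous.mul ?_ ?_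
      · exact Complex.continuous_ofReal.comp ((continuous_apply j).comp continuous_snd)
      · refine Continuous.add ?_ continuous_const
        exact continuous_const.mul
          (Complex.continuous_ofReal.comp ((hinner (γ j)).comp continuous_fst))
  -- integrability on the product space
  have hInt : Integrable (Function.uncurry fun (x : EuclideanSpace ℝ (Fin k)) (s : Fin n → ℝ) =>
      Complex.exp (-Complex.I * (⟪x, c⟫ : ℂ)) * ψ x *
        Complex.exp (-∑ j, (s j : ℂ) * z j x))
      (volume.prod (volume.restrict (Ici (0 : Fin n → ℝ)))) := by
    refine Integrable.mono'
      (g := fun p : EuclideanSpace ℝ (Fin k) × (Fin n → ℝ) => ‖ψ p.1‖ * Real.exp (-∑ j, p.2 j * (ε * ⟪γ j, ξ⟫)))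
      (Integrable.mul_prod (ψ.integrable.norm)
        (aux_integrableOn_pi_rexp (b := fun j => ε * ⟪γ j, ξ⟫)
          (fun j => mul_pos hε (hpol j))))
      hcont.aestronglyMeasurable ?_
    filter_upwards with p
    obtain ⟨x, s⟩ := p
    have h1 : ‖Complex.exp (-Complex.I * (⟪x, c⟫ : ℂ))‖ = 1 := by
      rw [Complex.norm_exp]
      simp
    have h2 : ‖Complex.exp (-∑ j, (s j : ℂ) * z j x)‖
        = Real.exp (-∑ j, s j * (ε * ⟪γ j, ξ⟫)) := by
      rw [Complex.norm_exp]
      congr 1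
      rw [Complex.neg_re, Complex.re_sum]
      congr 1
      refine Finset.sum_congr rfl fun j _ => ?_
      simp [hz_def, Complex.mul_re]
    simp only [Function.uncurry]
    rw [norm_mul, norm_mul, h1, h2, one_mul]
  -- the chain of equalities
  calc
    (∫ x : EuclideanSpace ℝ (Fin k), Complex.exp (-Complex.I * (⟪x, c⟫ : ℂ)) * ψ x * ∏ j, (z j x)⁻¹)
        = ∫ x : EuclideanSpace ℝ (Fin k), Complex.exp (-Complex.I * (⟪x, c⟫ : ℂ)) * ψ x *
            ∫ s in Ici (0 : Fin n → ℝ), Complex.exp (-∑ j, (s j : ℂ) * z j x) := by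
      refine integral_congr_ae (Eventually.of_forall fun x => ?_)
      beta_reduce
      rw [aux_integral_pi_cexp (hz_pos x)]
    _ = ∫ x : EuclideanSpace ℝ (Fin k), ∫ s in Ici (0 : Fin n → ℝ),
          Complex.exp (-Complex.I * (⟪x, c⟫ : ℂ)) * ψ x *
            Complex.exp (-∑ j, (s j : ℂ) * z j x) := by
      refine integral_congr_ae (Eventually.of_forall fun x => ?_)
      beta_reduce
      rw [integral_const_mul]
    _ = ∫ s in Ici (0 : Fin n → ℝ), ∫ x : EuclideanSpace ℝ (Fin k),
          Complex.exp (-Complex.I * (⟪x, c⟫ : ℂ)) * ψ x *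
            Complex.exp (-∑ j, (s j : ℂ) * z j x) := integral_integral_swap hInt
    _ = ∫ s in Set.Ici (0 : Fin n → ℝ),
          ((Real.exp (-∑ j, s j * (ε * ⟪γ j, ξ⟫)) : ℝ) : ℂ) *
            ∫ x : EuclideanSpace ℝ (Fin k), Complex.exp (-Complex.I * (⟪x, c + ∑ j, s j • γ j⟫ : ℂ)) * ψ x := by
      refine integral_congr_ae (Eventually.of_forall fun s => ?_)
      beta_reduce
      rw [← integral_const_mul]
      refine integral_congr_ae (Eventually.of_forall fun x => ?_)
      beta_reduce
      have hts : (⟪x, c + ∑ j, s j • γ j⟫ : ℝ) = ⟪x, c⟫ + ∑ j, s j * ⟪γ j, x⟫ := by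
        rw [inner_add_right, inner_sum]
        congr 1
        exact Finset.sum_congr rfl fun j _ => by
          rw [real_inner_smul_right, real_inner_comm]
      have hterm : ∀ j, (s j : ℂ) * z j x
          = Complex.I * ((s j * ⟪γ j, x⟫ : ℝ) : ℂ) + ((s j * (ε * ⟪γ j, ξ⟫) : ℝ) : ℂ) := by
        intro j; rw [hz_def]; push_cast; ring
      rw [show (∑ j, (s j : ℂ) * z j x)
            = Complex.I * ((∑ j, s j * ⟪γ j, x⟫ : ℝ) : ℂ)
              + ((∑ j, s j * (ε * ⟪γ j, ξ⟫) : ℝ) : ℂ) by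
        rw [Finset.sum_congr rfl fun j _ => hterm j, Finset.sum_add_distrib, ← Finset.mul_sum]
        push_cast
        ring]
      rw [hts]
      rw [mul_comm (Complex.exp (-Complex.I * (⟪x, c⟫ : ℂ))) (ψ x : ℂ)]
      rw [mul_assoc, ← Complex.exp_add]
      rw [Complex.ofReal_exp, mul_comm ((ψ x : ℂ))]
      rw [← mul_assoc, ← Complex.exp_add]
      congr 2
      push_cast
      ring


/-- Let `γ₁,…,γ_n ∈ ℝ^k` (`n ≥ 1`) be polarized by `ξ`, let
`c ∈ ℝ^k` and `ψ ∈ 𝒮(ℝ^k)`.  With `ψ̂(t) = ∫ e^{−i⟪x,t⟫} ψ(x) dx`,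
`∫_{[0,∞)^n} ψ̂(c + Σ_j s_j γ_j) ds
  = lim_{ε→0⁺} ∫_{ℝ^k} e^{−i⟪x,c⟫} ψ(x) Π_j (i⟪γ_j,x⟫ + ε⟪γ_j,ξ⟫)⁻¹ dx`;
in particular the limit on the right exists.  (This is the rigorous form of
the statement that the Fourier transform of `x ↦ e^{i⟪c,x⟫}/Π_j ⟪γ_j,x⟫`,
with each factor interpreted as the boundary value `1/(⟪γ_j,·⟫ + i0)`,
equals up to the constant `(2πi)^n` the cone distribution
`δ_c ∗ h_{γ₁} ∗ ⋯ ∗ h_{γ_n}`.) -/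
theorem stmt_8 (k n : ℕ) (hn : 1 ≤ n)
    (γ : Fin n → EuclideanSpace ℝ (Fin k)) (ξ : EuclideanSpace ℝ (Fin k))
    (hpol : ∀ j, 0 < ⟪γ j, ξ⟫) (c : EuclideanSpace ℝ (Fin k))
    (ψ : SchwartzMap (EuclideanSpace ℝ (Fin k)) ℂ) :
    Tendsto
      (fun ε : ℝ =>
        ∫ x : EuclideanSpace ℝ (Fin k),
          Complex.exp (-Complex.I * (⟪x, c⟫ : ℂ)) * ψ x *
            ∏ j, (Complex.I * (⟪γ j, x⟫ : ℂ) + ((ε * ⟪γ j, ξ⟫ : ℝ) : ℂ))⁻¹)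
      (𝓝[>] (0 : ℝ))
      (𝓝 (∫ s in Set.Ici (0 : Fin n → ℝ),
        ∫ x : EuclideanSpace ℝ (Fin k),
          Complex.exp (-Complex.I * (⟪x, c + ∑ j, s j • γ j⟫ : ℂ)) * ψ x)) := by

  set F : (Fin n → ℝ) → ℂ := fun s =>
    ∫ x : EuclideanSpace ℝ (Fin k),
      Complex.exp (-Complex.I * (⟪x, c + ∑ j, s j • γ j⟫ : ℂ)) * ψ x with hF_def
  set φ : SchwartzMap (EuclideanSpace ℝ (Fin k)) ℂ := SchwartzMap.fourierTransformCLM ℂ ψ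
    with hφ_def
  have hFφ : ∀ s : Fin n → ℝ, F s = φ ((2 * Real.pi)⁻¹ • (c + ∑ j, s j • γ j)) := by
    intro s
    rw [hF_def]
    beta_reduce
    rw [aux_fourier_eq ψ (c + ∑ j, s j • γ j), hφ_def]
    rw [SchwartzMap.fourierTransformCLM_apply]
    rfl
  have hFcont : Continuous F := by
    rw [funext hFφ]
    exact φ.continuous.comp (by fun_prop)
  have hFint : IntegrableOn F (Ici (0 : Fin n → ℝ)) := by
    rw [funext hFφ]
    exact aux_decay_integrable hn γ ξ hpol c φ
  have key : Tendsto
      (fun ε : ℝ => ∫ s in Set.Ici (0 : Fin n → ℝ),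
        ((Real.exp (-∑ j, s j * (ε * ⟪γ j, ξ⟫)) : ℝ) : ℂ) * F s)
      (𝓝[>] (0 : ℝ)) (𝓝 (∫ s in Set.Ici (0 : Fin n → ℝ), F s)) := by
    refine tendsto_integral_filter_of_dominated_convergence (bound := fun s => ‖F s‖)
      ?_ ?_ hFint.norm ?_
    · filter_upwards with ε
      refine Continuous.aestronglyMeasurable ?_
      refine Continuous.mul ?_ hFcont
      exact Complex.continuous_ofReal.comp (Real.continuous_exp.comp
        (Continuous.neg (continuous_finset_sum _
          fun j _ => (continuous_apply j).mul continuous_const)))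
    · filter_upwards [eventually_mem_nhdsWithin] with ε (hε : ε ∈ Ioi (0:ℝ))
      rw [ae_restrict_iff' aux_measurable_Ici_pi]
      filter_upwards with s hs
      have hs' : ∀ j, 0 ≤ s j := fun j => hs j
      rw [norm_mul, Complex.norm_real, Real.norm_eq_abs,
        _root_.abs_of_nonneg (Real.exp_nonneg _)]
      have hB : 0 ≤ ∑ j, s j * (ε * ⟪γ j, ξ⟫) :=
        Finset.sum_nonneg fun j _ => mul_nonneg (hs' j)
          (mul_nonneg (le_of_lt hε) (hpol j).le)
      have : Real.exp (-∑ j, s j * (ε * ⟪γ j, ξ⟫)) ≤ 1 :=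
        Real.exp_le_one_iff.2 (neg_nonpos.2 hB)
      nlinarith [norm_nonneg (F s), this, Real.exp_nonneg (-∑ j, s j * (ε * ⟪γ j, ξ⟫))]
    · refine Eventually.of_forall fun s => ?_
      have hcont : Continuous fun ε : ℝ =>
          ((Real.exp (-∑ j, s j * (ε * ⟪γ j, ξ⟫)) : ℝ) : ℂ) * F s := by
        refine Continuous.mul ?_ continuous_const
        exact Complex.continuous_ofReal.comp (Real.continuous_exp.comp
          (Continuous.neg (continuous_finset_sum _
            fun j _ => continuous_const.mul (continuous_id.mul continuous_const))))
      have h0 := (hcont.tendsto 0).mono_left (nhdsWithin_le_nhds (s := Ioi (0:ℝ)))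
      simpa using h0
  refine key.congr' ?_
  filter_upwards [eventually_mem_nhdsWithin] with ε (hε : ε ∈ Ioi (0:ℝ))
  exact (aux_eps_eq γ ξ hpol c ψ hε).symm
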